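/- A 2-connected simple graph G is minimally 2-connected if and only if no cycle of G has a chord. -/

import Mathlib

namespace SimpleGraph

variable {V : Type*}

/-- A simple graph is `2`-connected if it has at least `3` vertices and
deleting any single vertex leaves a connected graph. -/
def TwoConnected [Fintype V] (G : SimpleGraph V) : Prop :=
  3 ≤ Fintype.card V ∧ ∀ x : V, (G.induce {y | y ≠ x}).Connected

/-- A simple graph is minimally `2`-connected if it is `2`-connected and the deletion of
any edge yields a graph that is not `2`-connected. -/
def MinimallyTwoConnected [Fintype V] (G : SimpleGraph V) : Prop :=
  G.TwoConnected ∧ ∀ e ∈ G.edgeSet, ¬ (G.deleteEdges {e}).TwoConnected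

/-- Two `u`–`v` walks are internally disjoint if they share no vertex besides `u` and `v`
and share no edge. -/
def IntDisjoint (G : SimpleGraph V) {u v : V} (p q : G.Walk u v) : Prop :=
  (∀ w ∈ p.support, w ∈ q.support → w = u ∨ w = v) ∧ ∀ e ∈ p.edges, e ∉ q.edges

/-- `κ_G(u,v)`: the maximum number of pairwise internally disjoint `u`–`v` paths in `G`. -/
noncomputable def kappa (G : SimpleGraph V) (u v : V) : ℕ :=
  sSup {k | ∃ p : Fin k → G.Walk u v, (∀ i, (p i).IsPath) ∧
    ∀ i j, i ≠ j → G.IntDisjoint (p i) (p j)}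

/-- The average connectivity of `G`: the average of `κ_G(u,v)` over all unordered pairs of
distinct vertices (computed here as the sum over ordered pairs divided by `n(n-1)`). -/
noncomputable def avgKappa [Fintype V] [DecidableEq V] (G : SimpleGraph V) : ℚ :=
  (∑ p ∈ Finset.univ.offDiag, (G.kappa p.1 p.2 : ℚ)) /
    ((Fintype.card V : ℚ) * ((Fintype.card V : ℚ) - 1))

end SimpleGraph

namespace SimpleGraph
namespace Walk

variable {V : Type*} {G : SimpleGraph V}

lemma end_mem_support_tail' {a b : V} (p : G.Walk a b) (h : a ≠ b) :
    b ∈ p.support.tail := by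
  cases p with
  | nil => exact absurd rfl h
  | cons h q => simpa using q.end_mem_support

variable [DecidableEq V]

lemma not_mem_support_takeUntil' {a b u : V} {p : G.Walk a b} (hp : p.IsPath)
    (hu : u ∈ p.support) (hub : u ≠ b) : b ∉ (p.takeUntil u hu).support := by
  intro hb
  have hspec := p.take_spec hu
  have hnodup : p.support.Nodup := hp.support_nodup
  rw [← hspec, support_append] at hnodup
  have hb2 : b ∈ (p.dropUntil u hu).support.tail :=
    end_mem_support_tail' _ hub
  exact (List.disjoint_of_nodup_append hnodup) hb hb2

lemma support_eq_cons' {a b : V} (q : G.Walk a b) : q.support = a :: q.support.tail := by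
  cases q <;> simp

lemma isPath_append' {a b c : V} {p : G.Walk a b} {q : G.Walk b c}
    (hp : p.IsPath) (hq : q.IsPath)
    (hd : ∀ x, x ∈ p.support → x ∈ q.support → x = b) : (p.append q).IsPath := by
  rw [isPath_def, support_append]
  have h2 := hq.support_nodup
  rw [support_eq_cons' q] at h2
  refine List.Nodup.append hp.support_nodup (List.nodup_cons.mp h2).2 ?_
  intro x hx1 hx2
  have hxb : x = b := hd x hx1 (List.mem_of_mem_tail hx2)
  subst hxb
  exact (List.nodup_cons.mp h2).1 hx2

end Walk
end SimpleGraph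

namespace SimpleGraph

variable {V : Type*} {G : SimpleGraph V} [DecidableEq V]

open Walk

lemma exists_walk_between {a b x y : V} (p : G.Walk a b) (hp : p.IsPath)
    (hx : x ∈ p.support) (hy : y ∈ p.support) (hxb : x ≠ b) (hyb : y ≠ b) :
    ∃ W : G.Walk x y, (∀ e ∈ W.edges, e ∈ p.edges) ∧ b ∉ W.support := by
  by_cases hy2 : y ∈ (p.dropUntil x hx).support
  · refine ⟨(p.dropUntil x hx).takeUntil y hy2, fun e he => ?_, ?_⟩
    · exact p.edges_dropUntil_subset hx ((p.dropUntil x hx).edges_takeUntil_subset hy2 he)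
    · exact not_mem_support_takeUntil' (hp.dropUntil hx) hy2 hyb
  · have hy1 : y ∈ (p.takeUntil x hx).support := by
      have := hy
      rw [← p.take_spec hx, mem_support_append_iff] at this
      tauto
    refine ⟨((p.takeUntil x hx).dropUntil y hy1).reverse, fun e he => ?_, ?_⟩
    · rw [edges_reverse, List.mem_reverse] at he
      exact p.edges_takeUntil_subset hx
        ((p.takeUntil x hx).edges_dropUntil_subset hy1 he)
    · rw [support_reverse, List.mem_reverse]
      intro hb
      exact not_mem_support_takeUntil' hp hx hxb
        (((p.takeUntil x hx).support_dropUntil_subset hy1) hb)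

lemma exists_prefix_until (S : Set V) [DecidablePred (· ∈ S)] {a b : V}
    (p : G.Walk a b) (hb : b ∈ S) :
    ∃ (z : V) (r : G.Walk a z), z ∈ S ∧ (∀ s ∈ r.support, s ∈ p.support) ∧
      (∀ s ∈ r.support, s ∈ S → s = z) ∧ (∀ e ∈ r.edges, e ∈ p.edges) ∧
      (p.IsPath → r.IsPath) := by
  induction p with
  | nil => exact ⟨_, Walk.nil, hb, by simp, by simp, by simp, by simp⟩
  | @cons a c b h q ih =>
    by_cases ha : a ∈ S
    · exact ⟨a, Walk.nil, ha, by simp, by simp, by simp, by simp⟩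
    · obtain ⟨z, r, hz, hsupp, hfirst, hedges, hpath⟩ := ih hb
      refine ⟨z, Walk.cons h r, hz, ?_, ?_, ?_, ?_⟩
      · intro s hs
        rw [support_cons, List.mem_cons] at hs ⊢
        exact hs.imp id (fun h' => hsupp s h')
      · intro s hs hsS
        rw [support_cons, List.mem_cons] at hs
        rcases hs with rfl | hs
        · exact absurd hsS ha
        · exact hfirst s hs hsS
      · intro e he
        rw [edges_cons, List.mem_cons] at he ⊢
        exact he.imp id (fun h' => hedges e h')
      · intro hP
        rw [cons_isPath_iff] at hP ⊢
        exact ⟨hpath hP.1, fun hc => hP.2 (hsupp a hc)⟩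

lemma Walk.IsCycle.isPath_takeUntil' {w z : V} {c : G.Walk w w} (hc : c.IsCycle)
    (hz : z ∈ c.support) (hzw : z ≠ w) : (c.takeUntil z hz).IsPath ∧ (c.dropUntil z hz).IsPath := by
  have hspec := c.take_spec hz
  have htail : c.support.tail =
      (c.takeUntil z hz).support.tail ++ (c.dropUntil z hz).support.tail := by
    have h1 : c.support = (c.takeUntil z hz).support ++ (c.dropUntil z hz).support.tail := by
      rw [← support_append, hspec]
    have h2 := support_eq_cons' c
    have h3 := support_eq_cons' (c.takeUntil z hz)
    rw [h2, h3] at h1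
    exact (List.cons.inj h1).2
  have hnd := hc.2
  rw [htail] at hnd
  have hdisj := List.disjoint_of_nodup_append hnd
  constructor
  · rw [isPath_def, support_eq_cons' (c.takeUntil z hz), List.nodup_cons]
    refine ⟨fun hw => ?_, (List.Nodup.of_append_left hnd)⟩
    exact hdisj hw (end_mem_support_tail' _ hzw)
  · rw [isPath_def, support_eq_cons' (c.dropUntil z hz), List.nodup_cons]
    refine ⟨fun hzz => ?_, (List.Nodup.of_append_right hnd)⟩
    exact hdisj (end_mem_support_tail' _ (Ne.symm hzw)) hzz

lemma reachable_induce_of_walk {S : Set V} {x y : V} (W : G.Walk x y)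
    (hS : ∀ s ∈ W.support, s ∈ S) (hx : x ∈ S) (hy : y ∈ S) :
    (G.induce S).Reachable ⟨x, hx⟩ ⟨y, hy⟩ := by
  induction W with
  | nil => rfl
  | @cons a c b h q ih =>
    have hc : c ∈ S := hS c (by simp)
    refine Reachable.trans ?_ (ih (fun s hs => hS s (by simp [hs])) hc hy)
    exact Adj.reachable (by simpa using h)

lemma exists_walk_of_reachable_induce {S : Set V} {a b : S}
    (h : (G.induce S).Reachable a b) : ∃ W : G.Walk a b, ∀ s ∈ W.support, s ∈ S := by
  obtain ⟨w⟩ := h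
  refine ⟨w.map (Embedding.induce S).toHom, fun s hs => ?_⟩
  have := Walk.support_map (Embedding.induce S).toHom w
  erw [this, List.mem_map] at hs
  obtain ⟨t, _, rfl⟩ := hs
  exact t.2

end SimpleGraph

namespace SimpleGraph

variable {V : Type*} {G : SimpleGraph V}

open Walk

lemma end_mem_support_tail_of_not_nil {a b : V} (p : G.Walk a b) (h : ¬p.Nil) :
    b ∈ p.support.tail := by
  cases p with
  | nil => simp at h
  | cons h q => simpa using q.end_mem_support

lemma mem_rotate_support [DecidableEq V] {b w x : V} {c : G.Walk b b} (hc : c.IsCycle)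
    (hw : w ∈ c.support) : x ∈ (c.rotate w hw).support ↔ x ∈ c.support := by
  have h1 : ¬c.Nil := hc.not_nil
  have h2 : ¬(c.rotate w hw).Nil := (hc.rotate hw).not_nil
  have key : ∀ {y : V} (q : G.Walk y y), ¬q.Nil → ∀ t, (t ∈ q.support ↔ t ∈ q.support.tail) := by
    intro y q hq t
    constructor
    · intro ht
      rw [Walk.support_eq_cons' q, List.mem_cons] at ht
      rcases ht with rfl | ht
      · exact end_mem_support_tail_of_not_nil q hq
      · exact ht
    · intro ht
      exact List.mem_of_mem_tail ht
  rw [key _ h2, key _ h1, (support_rotate c w hw).mem_iff]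

lemma connected_deleteEdges_of_detour {u v : V} (hconn : G.Connected)
    (hR : (G.deleteEdges {s(u, v)}).Reachable u v) :
    (G.deleteEdges {s(u, v)}).Connected := by
  rw [connected_iff]
  refine ⟨fun a b => ?_, hconn.nonempty⟩
  obtain ⟨p⟩ := hconn.preconnected a b
  induction p with
  | nil => rfl
  | @cons a c b h q ih =>
    refine Reachable.trans ?_ ih
    by_cases he : s(a, c) = s(u, v)
    · rw [Sym2.eq_iff] at he
      rcases he with ⟨rfl, rfl⟩ | ⟨rfl, rfl⟩
      · exact hR
      · exact hR.symm
    · exact Adj.reachable (by rw [deleteEdges_adj]; exact ⟨h, by simpa using he⟩)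

lemma exists_ne_ne [Fintype V] (h3 : 3 ≤ Fintype.card V) (a b : V) :
    ∃ z : V, z ≠ a ∧ z ≠ b := by
  classical
  by_contra hcon
  push_neg at hcon
  have hsub : (Finset.univ : Finset V) ⊆ {a, b} := by
    intro z _
    by_cases hz : z = a
    · simp [hz]
    · simp [hcon z hz]
  have := Finset.card_le_card hsub
  have h2 : ({a, b} : Finset V).card ≤ 2 := Finset.card_insert_le _ _ |>.trans (by simp)
  simp only [Finset.card_univ] at this
  omega

lemma TwoConnected.connected [Fintype V] (h : G.TwoConnected) : G.Connected := by
  classical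
  rw [connected_iff]
  have hpos : 0 < Fintype.card V := by have := h.1; omega
  refine ⟨fun a b => ?_, Fintype.card_pos_iff.mp hpos⟩
  obtain ⟨z, hza, hzb⟩ := exists_ne_ne h.1 a b
  have hcz := (h.2 z).preconnected ⟨a, hza.symm⟩ ⟨b, hzb.symm⟩
  obtain ⟨W, _⟩ := exists_walk_of_reachable_induce hcz
  exact ⟨W⟩

lemma TwoConnected.reachable_deleteEdges [Fintype V] (h : G.TwoConnected) {x y : V}
    (hxy : G.Adj x y) : (G.deleteEdges {s(x, y)}).Reachable x y := by
  classical
  obtain ⟨z, hzx, hzy⟩ := exists_ne_ne h.1 x y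
  -- walk from x to z avoiding y
  have h1 := (h.2 y).preconnected ⟨x, hxy.ne⟩ ⟨z, hzy⟩
  obtain ⟨W1, hW1⟩ := exists_walk_of_reachable_induce h1
  have h2 := (h.2 x).preconnected ⟨z, hzx⟩ ⟨y, hxy.ne'⟩
  obtain ⟨W2, hW2⟩ := exists_walk_of_reachable_induce h2
  have hW1e : ∀ e ∈ W1.edges, e ∉ ({s(x, y)} : Set (Sym2 V)) := by
    intro e he hes
    rw [Set.mem_singleton_iff] at hes
    subst hes
    exact hW1 y (W1.snd_mem_support_of_mem_edges he) rfl
  have hW2e : ∀ e ∈ W2.edges, e ∉ ({s(x, y)} : Set (Sym2 V)) := by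
    intro e he hes
    rw [Set.mem_singleton_iff] at hes
    subst hes
    exact hW2 x (W2.fst_mem_support_of_mem_edges he) rfl
  exact ⟨(W1.toDeleteEdges _ hW1e).append (W2.toDeleteEdges _ hW2e)⟩

lemma TwoConnected.exists_cycle_through_edge [Fintype V] (h : G.TwoConnected) {u v : V}
    (huv : G.Adj u v) :
    ∃ c : G.Walk u u, c.IsCycle ∧ v ∈ c.support := by
  classical
  obtain ⟨p⟩ := h.reachable_deleteEdges huv
  obtain ⟨q0, hq0⟩ : ∃ q0 : (G.deleteEdges {s(u, v)}).Walk u v, q0.IsPath := ⟨p.toPath, p.toPath.2⟩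
  have hq0e : ∀ e ∈ q0.edges, e ∈ G.edgeSet :=
    fun e he => by
      have := q0.edges_subset_edgeSet he
      rw [edgeSet_deleteEdges] at this
      exact this.1
  set q : G.Walk u v := q0.transfer G hq0e with hqdef
  have hq : q.IsPath := hq0.transfer _
  have hqe : s(u, v) ∉ q.edges := by
    intro he
    rw [Walk.edges_transfer] at he
    have := q0.edges_subset_edgeSet he
    rw [edgeSet_deleteEdges] at this
    exact this.2 rfl
  refine ⟨Walk.cons huv q.reverse, ?_, ?_⟩
  · rw [Walk.cons_isCycle_iff]
    refine ⟨hq.reverse, ?_⟩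
    rw [edges_reverse, List.mem_reverse]
    exact hqe
  · simp

end SimpleGraph

namespace SimpleGraph

variable {V : Type*} {G : SimpleGraph V}

open Walk

lemma TwoConnected.exists_cycle_through_pair [Fintype V] (hH : G.TwoConnected) :
    ∀ (n : ℕ) (u v : V), G.dist u v = n → u ≠ v →
      ∃ (b : V) (c : G.Walk b b), c.IsCycle ∧ u ∈ c.support ∧ v ∈ c.support := by
  classical
  have hconn := hH.connected
  intro n
  induction n using Nat.strong_induction_on with
  | _ n ih =>
    intro u v hdist hne
    have hpos : 0 < n := hdist ▸ hconn.pos_dist_of_ne hne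
    rcases eq_or_lt_of_le (by omega : 1 ≤ n) with h1 | h2
    · -- distance 1 : adjacent
      have hadj : G.Adj u v := dist_eq_one_iff_adj.mp (hdist.trans h1.symm)
      obtain ⟨c, hc, hvc⟩ := hH.exists_cycle_through_edge hadj
      exact ⟨u, c, hc, c.start_mem_support, hvc⟩
    · -- distance at least 2
      obtain ⟨p, hp⟩ := hconn.exists_walk_length_eq_dist u v
      rw [hdist] at hp
      have hnnil : ¬p.reverse.Nil := by
        rw [nil_iff_length_eq, length_reverse, hp]
        omega
      rw [not_nil_iff] at hnnil
      obtain ⟨w, hvw, q, hq⟩ := hnnil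
      have hql : q.length = n - 1 := by
        have := congr_arg Walk.length hq
        rw [length_reverse, hp, length_cons] at this
        omega
      have hdw_le : G.dist u w ≤ n - 1 := by
        have := dist_le q.reverse
        rwa [length_reverse, hql] at this
      have hdw_ge : n - 1 ≤ G.dist u w := by
        have htri := hconn.dist_triangle (u := u) (v := w) (w := v)
        have : G.dist w v ≤ 1 := by
          have := dist_le (Walk.cons hvw.symm Walk.nil : G.Walk w v)
          simpa using this
        omega
      have hdw : G.dist u w = n - 1 := le_antisymm hdw_le hdw_ge
      have hwu : u ≠ w := by
        intro hcon
        rw [← hcon, dist_self] at hdw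
        omega
      obtain ⟨b, C, hC, huC, hwC⟩ := ih (n - 1) (by omega) u w hdw hwu
      by_cases hvC : v ∈ C.support
      · exact ⟨b, C, hC, huC, hvC⟩
      -- rotate C at w
      set C' : G.Walk w w := C.rotate w hwC with hC'def
      have hC' : C'.IsCycle := hC.rotate hwC
      have hmem : ∀ x : V, x ∈ C'.support ↔ x ∈ C.support := fun x => mem_rotate_support hC hwC
      have huC' : u ∈ C'.support := (hmem u).mpr huC
      have hvC' : v ∉ C'.support := fun hc => hvC ((hmem v).mp hc)
      -- path from v to u avoiding w
      have hvnw : v ≠ w := hvw.ne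
      have hunw : u ≠ w := hwu
      have hreach := (hH.2 w).preconnected ⟨v, hvnw⟩ ⟨u, hunw⟩
      obtain ⟨W0, hW0⟩ := exists_walk_of_reachable_induce hreach
      obtain ⟨Q, hQpath, hQsub⟩ : ∃ Q : G.Walk v u, Q.IsPath ∧ Q.support ⊆ W0.support :=
        ⟨W0.toPath, W0.toPath.2, W0.support_toPath_subset⟩
      have hwQ : w ∉ Q.support := fun hc => (hW0 w (hQsub hc)) rfl
      -- first vertex of Q on C'
      obtain ⟨z, R, hzC', hRsupp, hRfirst, _, hRpath⟩ :=
        exists_prefix_until {x | x ∈ C'.support} Q huC'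
      have hRp : R.IsPath := hRpath hQpath
      have hwR : w ∉ R.support := fun hc => hwQ (hRsupp w hc)
      have hzw : z ≠ w := fun hc => hwR (hc ▸ R.end_mem_support)
      have harc := hC'.isPath_takeUntil' (hz := hzC') hzw
      -- the two arcs of C' at z
      have huarc : u ∈ (C'.takeUntil z hzC').support ∨ u ∈ (C'.dropUntil z hzC').support := by
        have := huC'
        rw [← C'.take_spec hzC', mem_support_append_iff] at this
        exact this
      obtain ⟨B, hBpath, hBsupp, huB⟩ :
          ∃ B : G.Walk z w, B.IsPath ∧ (∀ s ∈ B.support, s ∈ C'.support) ∧ u ∈ B.support := by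
        rcases huarc with h | h
        · exact ⟨(C'.takeUntil z hzC').reverse, harc.1.reverse,
            fun s hs => C'.support_takeUntil_subset hzC'
              (by rwa [support_reverse, List.mem_reverse] at hs),
            by rwa [support_reverse, List.mem_reverse]⟩
        · exact ⟨C'.dropUntil z hzC', harc.2,
            fun s hs => C'.support_dropUntil_subset hzC' hs, h⟩
      have hdisj : ∀ x, x ∈ R.support → x ∈ B.support → x = z :=
        fun x hx1 hx2 => hRfirst x hx1 (hBsupp x hx2)
      have hPpath : (R.append B).IsPath := Walk.isPath_append' hRp hBpath hdisj
      refine ⟨w, Walk.cons hvw.symm (R.append B), ?_, ?_, ?_⟩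
      · rw [Walk.cons_isCycle_iff]
        refine ⟨hPpath, fun hmem => ?_⟩
        rw [edges_append, List.mem_append] at hmem
        rcases hmem with hmem | hmem
        · exact hwR (R.fst_mem_support_of_mem_edges hmem)
        · exact hvC' (hBsupp v (B.snd_mem_support_of_mem_edges hmem))
      · rw [support_cons, List.mem_cons]
        right
        rw [mem_support_append_iff]
        exact Or.inr huB
      · rw [support_cons, List.mem_cons]
        right
        rw [mem_support_append_iff]
        exact Or.inl R.start_mem_support

end SimpleGraph

theorem stmt_1 {V : Type*} [Fintype V] (G : SimpleGraph V) (h : G.TwoConnected) :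
    G.MinimallyTwoConnected ↔
      ∀ (v : V) (c : G.Walk v v), c.IsCycle →
        ¬ ∃ x y : V, x ∈ c.support ∧ y ∈ c.support ∧ G.Adj x y ∧ s(x, y) ∉ c.edges := by
  classical
  open SimpleGraph Walk in
  constructor
  · -- minimal → chordless
    rintro ⟨-, hmin⟩ v c hcyc ⟨x, y, hx, hy, hadj, hne⟩
    set f : Sym2 V := s(x, y) with hfdef
    refine hmin f ((G.mem_edgeSet).mpr hadj) ⟨h.1, fun z => ?_⟩
    set S : Set V := {w | w ≠ z} with hSdef
    by_cases hzxy : z = x ∨ z = y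
    · -- the deleted edge is incident to z, so the induced graphs agree
      have heq : (G.deleteEdges {f}).induce S = G.induce S := by
        ext a b
        simp only [comap_adj, Function.Embedding.coe_subtype, deleteEdges_adj,
          Set.mem_singleton_iff, and_iff_left_iff_imp]
        intro _ hef
        rw [hfdef, Sym2.eq_iff] at hef
        have ha : (a : V) ≠ z := a.2
        have hb : (b : V) ≠ z := b.2
        rcases hzxy with rfl | rfl <;> rcases hef with ⟨h1, h2⟩ | ⟨h1, h2⟩ <;>
          first | exact ha h1 | exact hb h2 | exact ha h2 | exact hb h1
      rw [heq]
      exact h.2 z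
    · push_neg at hzxy
      obtain ⟨hzx, hzy⟩ := hzxy
      -- detour from x to y in the cycle avoiding z
      obtain ⟨W, hWe, hWz⟩ : ∃ W : G.Walk x y, (∀ e ∈ W.edges, e ∈ c.edges) ∧ z ∉ W.support := by
        by_cases hzc : z ∈ c.support
        · set c' : G.Walk z z := c.rotate z hzc with hc'def
          have hc' : c'.IsCycle := hcyc.rotate hzc
          have hmemc' : ∀ t : V, t ∈ c'.support ↔ t ∈ c.support :=
            fun t => mem_rotate_support hcyc hzc
          have hnnil : ¬c'.Nil := hc'.not_nil
          rw [not_nil_iff] at hnnil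
          obtain ⟨d, hzd, q, hq⟩ := hnnil
          have hqpath : q.IsPath := by
            have := hc'
            rw [hq, Walk.cons_isCycle_iff] at this
            exact this.1
          have hxq : x ∈ q.support := by
            have := (hmemc' x).mpr hx
            rw [hq, support_cons, List.mem_cons] at this
            exact this.resolve_left (Ne.symm hzx)
          have hyq : y ∈ q.support := by
            have := (hmemc' y).mpr hy
            rw [hq, support_cons, List.mem_cons] at this
            exact this.resolve_left (Ne.symm hzy)
          obtain ⟨W, hWe, hWz⟩ :=
            exists_walk_between q hqpath hxq hyq (Ne.symm hzx) (Ne.symm hzy)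
          refine ⟨W, fun e he => ?_, hWz⟩
          have h1 : e ∈ q.edges := hWe e he
          have h2 : e ∈ c'.edges := by rw [hq, edges_cons]; exact List.mem_cons_of_mem _ h1
          exact (rotate_edges c z hzc).mem_iff.mp h2
        · set c' : G.Walk x x := c.rotate x hx with hc'def
          have hyc' : y ∈ c'.support := (mem_rotate_support hcyc hx).mpr hy
          refine ⟨c'.takeUntil y hyc', fun e he => ?_, fun hmem => ?_⟩
          · exact (rotate_edges c x hx).mem_iff.mp (c'.edges_takeUntil_subset hyc' he)
          · exact hzc ((mem_rotate_support hcyc hx).mp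
              (c'.support_takeUntil_subset hyc' hmem))
      have hWf : ∀ e ∈ W.edges, e ∉ ({f} : Set (Sym2 V)) := by
        intro e he hef
        rw [Set.mem_singleton_iff] at hef
        exact hne (hef ▸ hWe e he)
      -- lift the detour into the induced graph
      set W' : (G.deleteEdges {f}).Walk x y := W.toDeleteEdges _ hWf with hW'def
      have hW's : W'.support = W.support := W.support_transfer _
      have hxS : x ∈ S := Ne.symm hzx
      have hyS : y ∈ S := Ne.symm hzy
      have hreach : ((G.deleteEdges {f}).induce S).Reachable ⟨x, hxS⟩ ⟨y, hyS⟩ := by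
        refine reachable_induce_of_walk W' (fun s hs => ?_) hxS hyS
        rw [hW's] at hs
        intro hsz
        exact hWz (hsz ▸ hs)
      have heq : (G.deleteEdges {f}).induce S =
          (G.induce S).deleteEdges {s((⟨x, hxS⟩ : S), (⟨y, hyS⟩ : S))} := by
        ext a b
        simp only [comap_adj, Function.Embedding.coe_subtype, deleteEdges_adj,
          Set.mem_singleton_iff]
        constructor
        · rintro ⟨hab, hef⟩
          refine ⟨hab, fun hc => hef ?_⟩
          rw [Sym2.eq_iff] at hc
          rw [hfdef, Sym2.eq_iff]
          rcases hc with ⟨h1, h2⟩ | ⟨h1, h2⟩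
          · exact Or.inl ⟨congrArg Subtype.val h1, congrArg Subtype.val h2⟩
          · exact Or.inr ⟨congrArg Subtype.val h1, congrArg Subtype.val h2⟩
        · rintro ⟨hab, hef⟩
          refine ⟨hab, fun hc => hef ?_⟩
          rw [hfdef, Sym2.eq_iff] at hc
          rw [Sym2.eq_iff]
          rcases hc with ⟨h1, h2⟩ | ⟨h1, h2⟩
          · exact Or.inl ⟨Subtype.ext h1, Subtype.ext h2⟩
          · exact Or.inr ⟨Subtype.ext h1, Subtype.ext h2⟩
      rw [heq] at hreach ⊢
      exact connected_deleteEdges_of_detour (h.2 z) hreach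
  · -- chordless → minimal
    intro hchord
    refine ⟨h, ?_⟩
    intro e he h2c
    induction e using Sym2.ind with
    | _ x y =>
      have hadj : G.Adj x y := (G.mem_edgeSet).mp he
      obtain ⟨b, c, hc, hxs, hys⟩ :=
        h2c.exists_cycle_through_pair ((G.deleteEdges {s(x, y)}).dist x y) x y rfl hadj.ne
      have hce : ∀ e ∈ c.edges, e ∈ G.edgeSet := by
        intro e he'
        have := c.edges_subset_edgeSet he'
        rw [edgeSet_deleteEdges] at this
        exact this.1
      refine hchord b (c.transfer G hce) (hc.transfer hce) ⟨x, y, ?_, ?_, hadj, ?_⟩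
      · rwa [support_transfer]
      · rwa [support_transfer]
      · rw [edges_transfer]
        intro hmem
        have := c.edges_subset_edgeSet hmem
        rw [edgeSet_deleteEdges] at this
        exact this.2 rfl
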